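/- Let ν be a probability measure on a measurable space E and let C be a convex set of probability measures on E (i.e., t·μ₀ + (1−t)·μ₁ ∈ C whenever μ₀, μ₁ ∈ C and t ∈ [0,1]). Suppose the infimum m = inf{H(μ|ν) : μ ∈ C} is finite and that μ₀, μ₁ ∈ C satisfy H(μ₀|ν) = H(μ₁|ν) = m. Then μ₀ = μ₁; in other words, a minimiser of the relative entropy over a convex constraint set is unique whenever the minimal value is finite. -/

import Mathlib

open MeasureTheory
open scoped ENNReal

open Classical in
/-- Relative entropy (Kullback–Leibler divergence): `H(μ|ν) = ∫ log (dμ/dν) dμ` when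
`μ ≪ ν` (and the integral is well defined), and `+∞` otherwise. -/
noncomputable def relEntropy {E : Type*} [MeasurableSpace E] (μ ν : Measure E) : EReal :=
  if μ ≪ ν ∧ Integrable (llr μ ν) μ then ((∫ x, llr μ ν x ∂μ : ℝ) : EReal) else ⊤

private lemma neg_one_le_mul_log {y : ℝ} (hy : 0 ≤ y) : -1 ≤ y * Real.log y := by
  rcases hy.eq_or_lt with h | h
  · simp [← h]
  · have hlog : Real.log y⁻¹ ≤ y⁻¹ - 1 := Real.log_le_sub_one_of_pos (by positivity)
    rw [Real.log_inv] at hlog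
    have h3 : y * (-Real.log y) ≤ y * (y⁻¹ - 1) := mul_le_mul_of_nonneg_left hlog h.le
    have h4 : y * (y⁻¹ - 1) = 1 - y := by field_simp
    nlinarith

/-- **Uniqueness of the entropy minimiser over a convex constraint set.** If `C` is a
convex set of probability measures, the infimum `m` of `H(·|ν)` over `C` is finite, and
`μ₀, μ₁ ∈ C` both attain it, then `μ₀ = μ₁`. -/
theorem relEntropy_minimiser_unique {E : Type*} [MeasurableSpace E]
    (ν : Measure E) [IsProbabilityMeasure ν]
    (C : Set (Measure E)) (hCprob : ∀ μ ∈ C, IsProbabilityMeasure μ)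
    (hCconv : ∀ μ₀ ∈ C, ∀ μ₁ ∈ C, ∀ t : ℝ, t ∈ Set.Icc (0 : ℝ) 1 →
      ENNReal.ofReal t • μ₀ + ENNReal.ofReal (1 - t) • μ₁ ∈ C)
    (m : EReal) (hm : m = ⨅ μ ∈ C, relEntropy μ ν)
    (hmfin : m ≠ ⊤ ∧ m ≠ ⊥)
    (μ₀ μ₁ : Measure E) (h₀ : μ₀ ∈ C) (h₁ : μ₁ ∈ C)
    (hH₀ : relEntropy μ₀ ν = m) (hH₁ : relEntropy μ₁ ν = m) :
    μ₀ = μ₁ := by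
  classical
  haveI : IsProbabilityMeasure μ₀ := hCprob μ₀ h₀
  haveI : IsProbabilityMeasure μ₁ := hCprob μ₁ h₁
  set φ : ℝ → ℝ := fun y => y * Real.log y with hφ
  -- extract finiteness information
  have hc₀ : μ₀ ≪ ν ∧ Integrable (llr μ₀ ν) μ₀ := by
    by_contra h; rw [relEntropy, if_neg h] at hH₀; exact hmfin.1 hH₀.symm
  have hc₁ : μ₁ ≪ ν ∧ Integrable (llr μ₁ ν) μ₁ := by
    by_contra h; rw [relEntropy, if_neg h] at hH₁; exact hmfin.1 hH₁.symm
  obtain ⟨hac₀, hint₀⟩ := hc₀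
  obtain ⟨hac₁, hint₁⟩ := hc₁
  rw [relEntropy, if_pos ⟨hac₀, hint₀⟩] at hH₀
  rw [relEntropy, if_pos ⟨hac₁, hint₁⟩] at hH₁
  set r : ℝ := ∫ x, llr μ₀ ν x ∂μ₀ with hr
  have hr₁ : ∫ x, llr μ₁ ν x ∂μ₁ = r := by
    have := hH₁.trans hH₀.symm
    exact_mod_cast this
  -- the midpoint measure
  have hμC := hCconv μ₀ h₀ μ₁ h₁ (1/2) ⟨by norm_num, by norm_num⟩
  set μ : Measure E := ENNReal.ofReal (1/2) • μ₀ + ENNReal.ofReal (1 - 1/2) • μ₁ with hμdef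
  haveI : IsProbabilityMeasure μ := hCprob μ hμC
  set c : ENNReal := ENNReal.ofReal (1/2) with hcdef
  have hcc : ENNReal.ofReal (1 - 1/2 : ℝ) = c := by rw [hcdef]; norm_num
  have hcT : c ≠ ∞ := ENNReal.ofReal_ne_top
  have hcR : c.toReal = 1/2 := ENNReal.toReal_ofReal (by norm_num)
  set f₀ : E → ENNReal := μ₀.rnDeriv ν with hf₀def
  set f₁ : E → ENNReal := μ₁.rnDeriv ν with hf₁def
  have hmf₀ : Measurable f₀ := Measure.measurable_rnDeriv μ₀ ν
  have hmf₁ : Measurable f₁ := Measure.measurable_rnDeriv μ₁ ν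
  have hμrep : μ = ν.withDensity (c • f₀ + c • f₁) := by
    rw [hμdef, hcc, withDensity_add_left (hmf₀.const_smul c),
      withDensity_smul c hmf₀, withDensity_smul c hmf₁,
      Measure.withDensity_rnDeriv_eq _ _ hac₀, Measure.withDensity_rnDeriv_eq _ _ hac₁]
  have hacμ : μ ≪ ν := hμrep ▸ withDensity_absolutelyContinuous ν _
  have hG : μ.rnDeriv ν =ᵐ[ν] c • f₀ + c • f₁ := by
    rw [hμrep]; exact Measure.rnDeriv_withDensity ν ((hmf₀.const_smul c).add (hmf₁.const_smul c))
  set A : E → ℝ := fun x => (f₀ x).toReal with hA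
  set B : E → ℝ := fun x => (f₁ x).toReal with hB
  have hf₀lt : ∀ᵐ x ∂ν, f₀ x < ∞ := Measure.rnDeriv_lt_top μ₀ ν
  have hf₁lt : ∀ᵐ x ∂ν, f₁ x < ∞ := Measure.rnDeriv_lt_top μ₁ ν
  have hGae : ∀ᵐ x ∂ν, (μ.rnDeriv ν x).toReal = 1/2 * A x + 1/2 * B x := by
    filter_upwards [hG, hf₀lt, hf₁lt] with x hx h0 h1
    rw [hx]
    simp only [Pi.add_apply, Pi.smul_apply, smul_eq_mul]
    rw [ENNReal.toReal_add (ENNReal.mul_ne_top hcT h0.ne) (ENNReal.mul_ne_top hcT h1.ne),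
      ENNReal.toReal_mul, ENNReal.toReal_mul, hcR]
  -- integral identities for μ₀, μ₁
  have hI₀ : ∫ x, φ (A x) ∂ν = r := by
    rw [hr, ← integral_rnDeriv_smul hac₀ (f := llr μ₀ ν)]
    refine integral_congr_ae (Filter.Eventually.of_forall fun x => ?_)
    simp [hφ, llr, smul_eq_mul, hA, hf₀def]
  have hI₁ : ∫ x, φ (B x) ∂ν = r := by
    rw [← hr₁, ← integral_rnDeriv_smul hac₁ (f := llr μ₁ ν)]
    refine integral_congr_ae (Filter.Eventually.of_forall fun x => ?_)
    simp [hφ, llr, smul_eq_mul, hB, hf₁def]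
  have hInt₀ : Integrable (fun x => φ (A x)) ν := by
    have := (integrable_rnDeriv_smul_iff hac₀).mpr hint₀
    refine this.congr (Filter.Eventually.of_forall fun x => ?_)
    simp [hφ, llr, smul_eq_mul, hA, hf₀def]
  have hInt₁ : Integrable (fun x => φ (B x)) ν := by
    have := (integrable_rnDeriv_smul_iff hac₁).mpr hint₁
    refine this.congr (Filter.Eventually.of_forall fun x => ?_)
    simp [hφ, llr, smul_eq_mul, hB, hf₁def]
  set u : E → ℝ := fun x => 1/2 * φ (A x) + 1/2 * φ (B x) with hu
  have hIntu : Integrable u ν := (hInt₀.const_mul _).add (hInt₁.const_mul _)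
  have hIu : ∫ x, u x ∂ν = r := by
    rw [hu]
    rw [integral_add (hInt₀.const_mul _) (hInt₁.const_mul _), integral_const_mul,
      integral_const_mul, hI₀, hI₁]
    ring
  have hAnn : ∀ x, (0:ℝ) ≤ A x := fun x => ENNReal.toReal_nonneg
  have hBnn : ∀ x, (0:ℝ) ≤ B x := fun x => ENNReal.toReal_nonneg
  have hconv : ∀ x, φ (1/2 * A x + 1/2 * B x) ≤ u x := by
    intro x
    have := Real.convexOn_mul_log.2 (Set.mem_Ici.2 (hAnn x)) (Set.mem_Ici.2 (hBnn x))
      (by norm_num : (0:ℝ) ≤ 1/2) (by norm_num : (0:ℝ) ≤ 1/2) (by norm_num)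
    simpa [smul_eq_mul, hφ, hu] using this
  have hlb : ∀ x, -1 ≤ φ (1/2 * A x + 1/2 * B x) :=
    fun x => neg_one_le_mul_log (by positivity)
  -- integrability for the midpoint
  set G : E → ℝ := fun x => (μ.rnDeriv ν x).toReal with hGdef
  have hIntG : Integrable (fun x => φ (G x)) ν := by
    refine Integrable.mono' (hIntu.norm.add (integrable_const 1)) ?_ ?_
    · exact (Real.continuous_mul_log.comp_aestronglyMeasurable
        ((Measure.measurable_rnDeriv μ ν).ennreal_toReal.aestronglyMeasurable))
    · filter_upwards [hGae] with x hx
      rw [hGdef]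
      simp only [hx, Pi.add_apply, Real.norm_eq_abs, abs_le, hφ, hu]
      constructor
      · have := hlb x
        have h2 : (0:ℝ) ≤ |u x| := abs_nonneg _
        simp only [hφ, hu] at this h2 ⊢
        linarith
      · have := hconv x
        have h2 : u x ≤ |u x| := le_abs_self _
        simp only [hφ, hu] at this h2 ⊢
        linarith
  have hIntllrμ : Integrable (llr μ ν) μ := by
    refine (integrable_rnDeriv_smul_iff hacμ).mp ?_
    refine hIntG.congr (Filter.Eventually.of_forall fun x => ?_)
    simp [hφ, llr, smul_eq_mul, hGdef]
  set I : ℝ := ∫ x, φ (G x) ∂ν with hI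
  have hEμ : relEntropy μ ν = (I : EReal) := by
    rw [relEntropy, if_pos ⟨hacμ, hIntllrμ⟩]
    congr 1
    rw [hI, ← integral_rnDeriv_smul hacμ (f := llr μ ν)]
    refine integral_congr_ae (Filter.Eventually.of_forall fun x => ?_)
    simp [hφ, llr, smul_eq_mul, hGdef]
  -- m ≤ relEntropy μ ν gives r ≤ I
  have hge : (r : EReal) ≤ (I : EReal) := by
    rw [← hEμ, hH₀, hm]
    exact iInf₂_le μ hμC
  have hrI : r ≤ I := by exact_mod_cast hge
  -- I ≤ r by convexity
  have hIle : I ≤ r := by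
    rw [hI, ← hIu]
    refine integral_mono_ae hIntG hIntu ?_
    filter_upwards [hGae] with x hx
    rw [hGdef]; simp only [hx]; exact hconv x
  have hIr : I = r := le_antisymm hIle hrI
  -- the nonnegative function u - φ∘G has zero integral
  have hzero : (fun x => u x - φ (G x)) =ᵐ[ν] 0 := by
    have hint : Integrable (fun x => u x - φ (G x)) ν := hIntu.sub hIntG
    have hnn : 0 ≤ᵐ[ν] fun x => u x - φ (G x) := by
      filter_upwards [hGae] with x hx
      have : φ (G x) ≤ u x := by rw [hGdef]; simp only [hx]; exact hconv x
      simpa using this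
    refine (integral_eq_zero_iff_of_nonneg_ae hnn hint).mp ?_
    rw [integral_sub hIntu hIntG, hIu, ← hI, hIr, sub_self]
  -- strict convexity forces A = B a.e.
  have hAB : ∀ᵐ x ∂ν, f₀ x = f₁ x := by
    filter_upwards [hzero, hGae, hf₀lt, hf₁lt] with x hx hGx h0 h1
    by_contra hne
    have hABne : A x ≠ B x := by
      intro h; exact hne ((ENNReal.toReal_eq_toReal_iff' h0.ne h1.ne).mp h)
    have := Real.strictConvexOn_mul_log.2 (Set.mem_Ici.2 (hAnn x)) (Set.mem_Ici.2 (hBnn x))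
      hABne (by norm_num : (0:ℝ) < 1/2) (by norm_num : (0:ℝ) < 1/2) (by norm_num)
    have hlt : φ (1/2 * A x + 1/2 * B x) < u x := by
      simpa [smul_eq_mul, hφ, hu] using this
    have heq : u x - φ (G x) = 0 := hx
    rw [hGdef] at heq
    simp only [hGx] at heq
    linarith
  calc μ₀ = ν.withDensity f₀ := (Measure.withDensity_rnDeriv_eq _ _ hac₀).symm
    _ = ν.withDensity f₁ := withDensity_congr_ae hAB
    _ = μ₁ := Measure.withDensity_rnDeriv_eq _ _ hac₁
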